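/- Let n ≥ 3 be an integer, a < b real numbers, and ρ : (a,b) → (0,∞) a twice differentiable function with ρ'(r) ≥ 0 for all r, satisfying 2 ρ(r) ρ''(r) ≤ (n−2)(1 − ρ'(r)²) for all r ∈ (a,b). Then the function m(r) := ρ(r)^{n−2} (1 − ρ'(r)²) is non-decreasing on (a,b). -/

import Mathlib

/-- Monotonicity of the higher-dimensional Hawking mass in arclength gauge: if `ρ > 0` is
non-decreasing and `2 ρ ρ'' ≤ (n−2)(1 − ρ'²)` (non-negative scalar curvature), then
`m(r) = ρ^{n−2} (1 − ρ'²)` is non-decreasing. -/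
theorem hawking_mass_monotone (n : ℕ) (hn : 3 ≤ n) (a b : ℝ) (hab : a < b)
    (ρ ρ' ρ'' : ℝ → ℝ)
    (hρpos : ∀ r ∈ Set.Ioo a b, 0 < ρ r)
    (hd1 : ∀ r ∈ Set.Ioo a b, HasDerivAt ρ (ρ' r) r)
    (hd2 : ∀ r ∈ Set.Ioo a b, HasDerivAt ρ' (ρ'' r) r)
    (hmono : ∀ r ∈ Set.Ioo a b, 0 ≤ ρ' r)
    (hscal : ∀ r ∈ Set.Ioo a b, 2 * ρ r * ρ'' r ≤ ((n : ℝ) - 2) * (1 - ρ' r ^ 2)) :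
    MonotoneOn (fun r => ρ r ^ (n - 2) * (1 - ρ' r ^ 2)) (Set.Ioo a b) := by
  set f : ℝ → ℝ := fun r => ρ r ^ (n - 2) * (1 - ρ' r ^ 2) with hf
  have hderiv : ∀ r ∈ Set.Ioo a b, HasDerivAt f
      (((n : ℝ) - 2) * ρ r ^ (n - 3) * ρ' r * (1 - ρ' r ^ 2)
        + ρ r ^ (n - 2) * (-(2 * ρ' r * ρ'' r))) r := by
    intro r hr
    have h1 : HasDerivAt (fun x => ρ x ^ (n - 2))
        (((n : ℝ) - 2) * ρ r ^ (n - 3) * ρ' r) r := by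
      have := (hd1 r hr).fun_pow (n - 2)
      have hcast : ((n - 2 : ℕ) : ℝ) = (n : ℝ) - 2 := by
        have : (2 : ℕ) ≤ n := by omega
        push_cast [Nat.cast_sub this]; ring
      have hexp : n - 2 - 1 = n - 3 := by omega
      simpa [hcast, hexp] using this
    have h2 : HasDerivAt (fun x => 1 - ρ' x ^ 2) (-(2 * ρ' r * ρ'' r)) r := by
      have := ((hd2 r hr).fun_pow 2).const_sub 1
      refine this.congr_deriv ?_
      push_cast; ring
    simpa using h1.fun_mul h2
  have key : ∀ r ∈ Set.Ioo a b,
      0 ≤ ((n : ℝ) - 2) * ρ r ^ (n - 3) * ρ' r * (1 - ρ' r ^ 2)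
        + ρ r ^ (n - 2) * (-(2 * ρ' r * ρ'' r)) := by
    intro r hr
    have hρ := hρpos r hr
    have hρ' := hmono r hr
    have hs := hscal r hr
    have hpow : ρ r ^ (n - 2) = ρ r ^ (n - 3) * ρ r := by
      rw [← pow_succ]
      congr 1
      omega
    have hrw : ((n : ℝ) - 2) * ρ r ^ (n - 3) * ρ' r * (1 - ρ' r ^ 2)
        + ρ r ^ (n - 2) * (-(2 * ρ' r * ρ'' r))
        = ρ r ^ (n - 3) * ρ' r * (((n : ℝ) - 2) * (1 - ρ' r ^ 2)
            - 2 * ρ r * ρ'' r) := by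
      rw [hpow]; ring
    rw [hrw]
    have h1 : 0 ≤ ρ r ^ (n - 3) * ρ' r := mul_nonneg (by positivity) hρ'
    have h2 : 0 ≤ ((n : ℝ) - 2) * (1 - ρ' r ^ 2) - 2 * ρ r * ρ'' r := by linarith
    exact mul_nonneg h1 h2
  have hconv : Convex ℝ (Set.Ioo a b) := convex_Ioo a b
  have hint : interior (Set.Ioo a b) = Set.Ioo a b := interior_Ioo
  apply monotoneOn_of_deriv_nonneg hconv
  · exact fun r hr => ((hderiv r hr).continuousAt).continuousWithinAt
  · rw [hint]; exact fun r hr => (hderiv r hr).differentiableAt.differentiableWithinAt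
  · rw [hint]; intro r hr
    rw [(hderiv r hr).deriv]
    exact key r hr
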